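/- Suppose the spherically-deprojected density and pressure satisfy ⟨ρ⟩(r) = √k ρ(c r) and ⟨P⟩(r) = √k P(c r) for constants k, c > 0, and the true ellipsoidal system obeys P'(a) = −ρ(a) Φ'(a) with enclosed mass M(a) = η a² Φ'(a). Then the spherically-inferred hydrostatic mass ⟨M⟩(r) := −(r²/⟨ρ⟩(r)) d⟨P⟩/dr satisfies ⟨M⟩(r) = M(c r)/(c η), i.e., ⟨M(<r)⟩ = (γ_s q_s^{1/2} η)^{-1} M(<a_v) with a_v = γ_s √q_s r. -/

import Mathlib

/-- Theorem 7 of the paper: the spherically-inferred hydrostatic mass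
⟨M⟩(r) = −(r²/⟨ρ⟩(r)) d⟨P⟩/dr of an ellipsoidal-potential cluster satisfies
⟨M⟩(r) = M(c r)/(c η), with ⟨ρ⟩(r) = √k ρ(c r), ⟨P⟩(r) = √k P(c r),
c = γ_s √q_s, for any temperature profile (units G = 1). -/
theorem stmt12 (k c η : ℝ) (hk : 0 < k) (hc : 0 < c) (hη : 0 < η)
    (ρ P Φ' P' : ℝ → ℝ)
    (hρpos : ∀ a : ℝ, 0 < a → 0 < ρ a)
    (hP : ∀ a : ℝ, 0 < a → HasDerivAt P (P' a) a)
    (hhe : ∀ a : ℝ, 0 < a → P' a = -(ρ a * Φ' a))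
    (M : ℝ → ℝ) (hM : ∀ a : ℝ, M a = η * a ^ 2 * Φ' a)
    (ρavg Pavg : ℝ → ℝ)
    (hρavg : ∀ r : ℝ, ρavg r = Real.sqrt k * ρ (c * r))
    (hPavg : ∀ r : ℝ, Pavg r = Real.sqrt k * P (c * r)) :
    ∀ r : ℝ, 0 < r →
      -(r ^ 2 / ρavg r) * deriv Pavg r = M (c * r) / (c * η) := by
  intro r hr
  have hcr : 0 < c * r := mul_pos hc hr
  have hinner : HasDerivAt (fun x : ℝ => P (c * x)) (P' (c * r) * c) r :=
    (hP (c * r) hcr).comp r (by simpa using (hasDerivAt_id r).const_mul c)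
  have hD : HasDerivAt Pavg (Real.sqrt k * (P' (c * r) * c)) r := by
    have := hinner.const_mul (Real.sqrt k)
    simpa [funext hPavg] using this
  rw [hD.deriv, hρavg r, hhe (c * r) hcr, hM]
  have hsk : Real.sqrt k ≠ 0 := (Real.sqrt_pos.mpr hk).ne'
  have hρ := (hρpos (c * r) hcr).ne'
  field_simp
  ring_nf
  rw [mul_comm r c]
  field_simp
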